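/- Let q ≥ 2 and d ≥ 2 be coprime integers, and let Λ ⊆ G_d = {a ∈ (ℤ/dℤ)^4 : Σ a_i = 0} be nonempty and stable under multiplication by q. Then the number of orbits of Λ under multiplication by q satisfies |O_q(Λ)| ≤ 1 + 8 log q · |Λ| / log |Λ| when |Λ| ≥ 2. In particular |O_q(Λ)| ≪ log q · |Λ| / log |Λ| with an absolute effective constant. -/

import Mathlib

lemma ker_card_le (d m : ℕ) (hd : 0 < d) (hm : 0 < m) :
    Nat.card {x : ZMod d // (m : ZMod d) * x = 0} ≤ m := by
  haveI : NeZero d := ⟨hd.ne'⟩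
  have hdvd : ∀ x : {x : ZMod d // (m : ZMod d) * x = 0}, d ∣ (x : ZMod d).val * m := by
    intro x
    rw [← ZMod.natCast_eq_zero_iff]
    push_cast
    rw [ZMod.natCast_zmod_val, mul_comm]
    exact x.2
  have hlt : ∀ x : {x : ZMod d // (m : ZMod d) * x = 0}, (x : ZMod d).val * m / d < m := by
    intro x
    apply Nat.div_lt_of_lt_mul
    exact (Nat.mul_lt_mul_right hm).mpr (ZMod.val_lt _)
  have key : Nat.card {x : ZMod d // (m : ZMod d) * x = 0} ≤ Nat.card (Fin m) :=
    Nat.card_le_card_of_injective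
      (fun x => (⟨(x : ZMod d).val * m / d, hlt x⟩ : Fin m)) (by
        intro x y hxy
        simp only [Fin.mk.injEq] at hxy
        have hx := Nat.div_mul_cancel (hdvd x)
        have hy := Nat.div_mul_cancel (hdvd y)
        have : (x : ZMod d).val * m = (y : ZMod d).val * m := by
          rw [← hx, ← hy, hxy]
        have hv : (x : ZMod d).val = (y : ZMod d).val :=
          Nat.eq_of_mul_eq_mul_right hm this
        ext
        rw [← ZMod.natCast_zmod_val (x : ZMod d), ← ZMod.natCast_zmod_val (y : ZMod d), hv])
  simpa using key

lemma geom_aux (r : ℕ) (hr : 8 ≤ r) (m : ℕ) :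
    7 * ∑ ℓ ∈ Finset.Icc 1 m, r ^ ℓ ≤ 8 * r ^ m := by
  induction m with
  | zero => simp
  | succ n ih =>
    rw [Finset.sum_Icc_succ_top (Nat.succ_le_succ (Nat.zero_le n)), pow_succ]
    have h2 : 0 < r ^ n := pow_pos (by omega) n
    nlinarith [ih]



lemma slice_card_le (d q ℓ : ℕ) (hd : 0 < d) (hq : 2 ≤ q) (hl : 1 ≤ ℓ) :
    Nat.card {a : Fin 4 → ZMod d // (∀ i, (q : ZMod d) ^ ℓ * a i = a i) ∧ ∑ i, a i = 0}
      ≤ (q ^ 3) ^ ℓ := by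
  haveI : NeZero d := ⟨hd.ne'⟩
  have hql : 2 ≤ q ^ ℓ := le_trans hq (Nat.le_self_pow (by omega) q)
  obtain ⟨m, hm⟩ : ∃ m, m = q ^ ℓ - 1 := ⟨_, rfl⟩
  have hm1 : 1 ≤ m := by omega
  have hcast : ((m : ℕ) : ZMod d) = (q : ZMod d) ^ ℓ - 1 := by
    rw [hm]
    push_cast [Nat.cast_sub (show 1 ≤ q ^ ℓ by omega)]
    ring
  have hker : ∀ (a : Fin 4 → ZMod d), (∀ i, (q : ZMod d) ^ ℓ * a i = a i) →
      ∀ i, (m : ZMod d) * a i = 0 := by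
    intro a ha i
    rw [hcast, sub_mul, one_mul, ha i, sub_self]
  have hKc : Nat.card {x : ZMod d // (m : ZMod d) * x = 0} ≤ m := ker_card_le d m hd hm1
  have key : Nat.card {a : Fin 4 → ZMod d //
      (∀ i, (q : ZMod d) ^ ℓ * a i = a i) ∧ ∑ i, a i = 0}
      ≤ Nat.card ({x : ZMod d // (m : ZMod d) * x = 0} ×
          {x : ZMod d // (m : ZMod d) * x = 0} × {x : ZMod d // (m : ZMod d) * x = 0}) := by
    apply Nat.card_le_card_of_injective
      (fun a => (⟨a.1 0, hker a.1 a.2.1 0⟩, ⟨a.1 1, hker a.1 a.2.1 1⟩,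
        ⟨a.1 2, hker a.1 a.2.1 2⟩))
    intro a b hab
    simp only [Prod.mk.injEq, Subtype.mk.injEq] at hab
    obtain ⟨h0, h1, h2⟩ := hab
    have hsa := a.2.2
    have hsb := b.2.2
    rw [Fin.sum_univ_four] at hsa hsb
    rw [h0, h1, h2] at hsa
    have h3 : a.1 3 = b.1 3 := add_left_cancel (hsa.trans hsb.symm)
    apply Subtype.ext; funext i
    fin_cases i
    · exact h0
    · exact h1
    · exact h2
    · exact h3
  rw [Nat.card_prod, Nat.card_prod] at key
  have hKq : Nat.card {x : ZMod d // (m : ZMod d) * x = 0} ≤ q ^ ℓ := hKc.trans (by rw [hm]; exact Nat.sub_le _ _)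
  have h2 : Nat.card {x : ZMod d // (m : ZMod d) * x = 0} *
      (Nat.card {x : ZMod d // (m : ZMod d) * x = 0} *
       Nat.card {x : ZMod d // (m : ZMod d) * x = 0}) ≤ (q ^ ℓ) * ((q ^ ℓ) * (q ^ ℓ)) :=
    Nat.mul_le_mul hKq (Nat.mul_le_mul hKq hKq)
  have h3 : (q ^ ℓ) * ((q ^ ℓ) * (q ^ ℓ)) = (q ^ 3) ^ ℓ := by
    rw [← pow_mul]; ring
  exact key.trans (le_of_le_of_eq h2 h3)


set_option maxHeartbeats 2000000 in
/-- Let `q, d ≥ 2` be coprime and `Λ ⊆ G_d = {a ∈ (ℤ/dℤ)^4 : Σ aᵢ = 0}` nonempty and stable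
under multiplication by `q`, with `|Λ| ≥ 2`. Then the number of orbits of `Λ` under
multiplication by `q` satisfies `|O_q(Λ)| ≤ 1 + 8 log q · |Λ| / log |Λ|`. -/
theorem card_orbits_le (q d : ℕ) (hq : 2 ≤ q) (hd : 2 ≤ d) (hqd : Nat.Coprime q d)
    (Λ : Set (Fin 4 → ZMod d)) (hne : Λ.Nonempty)
    (hsub : ∀ a ∈ Λ, ∑ i, a i = 0)
    (hstab : ∀ a ∈ Λ, (fun i => (q : ZMod d) * a i) ∈ Λ)
    (hcard : 2 ≤ Nat.card Λ) :
    (Nat.card {S : Set (Fin 4 → ZMod d) |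
        ∃ a ∈ Λ, S = {b | ∃ n : ℕ, b = fun i => (q : ZMod d) ^ n * a i}} : ℝ)
      ≤ 1 + 8 * Real.log q * (Nat.card Λ : ℝ) / Real.log (Nat.card Λ) := by
  classical
  haveI : NeZero d := ⟨by omega⟩
  let O : (Fin 4 → ZMod d) → Set (Fin 4 → ZMod d) :=
    fun a => {b | ∃ n : ℕ, b = fun i => (q : ZMod d) ^ n * a i}
  show (Nat.card {S : Set (Fin 4 → ZMod d) | ∃ a ∈ Λ, S = O a} : ℝ) ≤ _
  -- a power of q equal to 1
  have hu : IsUnit ((q : ZMod d)) := (ZMod.isUnit_iff_coprime q d).mpr hqd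
  obtain ⟨M', hqM⟩ : ∃ M' : ℕ, (q : ZMod d) ^ (M' + 1) = 1 := by
    set t := orderOf hu.unit with ht
    refine ⟨t - 1, ?_⟩
    have hpos : 0 < t := orderOf_pos hu.unit
    have h1 : (hu.unit : ZMod d) ^ t = 1 := by
      rw [← Units.val_pow_eq_pow_val, ht, pow_orderOf_eq_one, Units.val_one]
    rw [Nat.sub_add_cancel hpos, ← hu.unit_spec]
    exact h1
  -- basic orbit lemmas
  have hmemO : ∀ a, a ∈ O a := by
    intro a
    exact ⟨0, by funext i; simp⟩
  have hOeq : ∀ a b, b ∈ O a → O b = O a := by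
    rintro a b ⟨n, rfl⟩
    ext c
    constructor
    · rintro ⟨k, rfl⟩
      refine ⟨k + n, ?_⟩
      funext i
      simp only
      rw [pow_add]; ring
    · rintro ⟨k, rfl⟩
      refine ⟨k + n * M', ?_⟩
      funext i
      simp only
      rw [← mul_assoc, ← pow_add]
      have he : (q : ZMod d) ^ (k + n * M' + n) = (q : ZMod d) ^ k := by
        have h2 : k + n * M' + n = k + (M' + 1) * n := by ring
        rw [h2, pow_add, pow_mul, hqM, one_pow, mul_one]
      rw [he]
  have hOΛ : ∀ a ∈ Λ, O a ⊆ Λ := by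
    rintro a ha c ⟨n, rfl⟩
    induction n with
    | zero => simpa using ha
    | succ n ih =>
      have h2 := hstab _ ih
      have heq : (fun i => (q : ZMod d) ^ (n + 1) * a i)
          = (fun i => (q : ZMod d) * ((fun i => (q : ZMod d) ^ n * a i) i)) := by
        funext i; simp only; rw [pow_succ]; ring
      rw [heq]; exact h2
  -- finset versions
  have hfin : Λ.Finite := Set.toFinite Λ
  set A : Finset (Fin 4 → ZMod d) := hfin.toFinset with hA
  have hmemA : ∀ x, x ∈ A ↔ x ∈ Λ := fun x => hfin.mem_toFinset
  set B : Finset (Set (Fin 4 → ZMod d)) := A.image O with hB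
  have hgoal : Nat.card {S : Set (Fin 4 → ZMod d) | ∃ a ∈ Λ, S = O a} = B.card := by
    have hset : {S : Set (Fin 4 → ZMod d) | ∃ a ∈ Λ, S = O a} = (B : Set (Set (Fin 4 → ZMod d))) := by
      ext S
      simp only [Set.mem_setOf_eq, hB, Finset.coe_image, Set.mem_image, Finset.mem_coe, hmemA]
      constructor
      · rintro ⟨a, ha, rfl⟩; exact ⟨a, ha, rfl⟩
      · rintro ⟨a, ha, rfl⟩; exact ⟨a, ha, rfl⟩
    rw [hset, Nat.card_coe_set_eq, Set.ncard_coe_finset]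
  -- long orbit bound
  have hlong : ∀ T : ℕ, (B.filter (fun S => T ≤ S.ncard)).card * T ≤ A.card := by
    intro T
    have hfib : A.card = ∑ S ∈ B, (A.filter (fun a => O a = S)).card :=
      Finset.card_eq_sum_card_fiberwise (fun a ha => Finset.mem_image_of_mem O ha)
    have h1 : ∀ S ∈ B.filter (fun S => T ≤ S.ncard), T ≤ (A.filter (fun a => O a = S)).card := by
      intro S hS
      rw [Finset.mem_filter] at hS
      obtain ⟨hSB, hST⟩ := hS
      obtain ⟨a, haA, haO⟩ := Finset.mem_image.mp hSB
      have hSΛ : S ⊆ Λ := haO ▸ hOΛ a ((hmemA a).mp haA)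
      have hsubF : (Set.toFinite S).toFinset ⊆ A.filter (fun a => O a = S) := by
        intro x hx
        rw [Set.Finite.mem_toFinset] at hx
        rw [Finset.mem_filter, hmemA]
        refine ⟨hSΛ hx, ?_⟩
        have hx' : x ∈ O a := haO ▸ hx
        rw [hOeq a x hx', haO]
      calc T ≤ S.ncard := hST
        _ = (Set.toFinite S).toFinset.card := Set.ncard_eq_toFinset_card S (Set.toFinite S)
        _ ≤ (A.filter (fun a => O a = S)).card := Finset.card_le_card hsubF
    calc (B.filter (fun S => T ≤ S.ncard)).card * T
        = ∑ _S ∈ B.filter (fun S => T ≤ S.ncard), T := by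
          rw [Finset.sum_const, smul_eq_mul]
      _ ≤ ∑ S ∈ B.filter (fun S => T ≤ S.ncard), (A.filter (fun a => O a = S)).card :=
          Finset.sum_le_sum h1
      _ ≤ ∑ S ∈ B, (A.filter (fun a => O a = S)).card :=
          Finset.sum_le_sum_of_subset (Finset.filter_subset _ _)
      _ = A.card := hfib.symm
  -- short period extraction
  have hshortper : ∀ (T : ℕ) (b : Fin 4 → ZMod d), (O b).ncard < T →
      ∃ ℓ, 1 ≤ ℓ ∧ ℓ < T ∧ ∀ i, (q : ZMod d) ^ ℓ * b i = b i := by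
    intro T b hb
    have hcardO : Fintype.card (O b) < Fintype.card (Fin T) := by
      rw [Fintype.card_fin]
      calc Fintype.card (O b) = (O b).toFinset.card := (Set.toFinset_card _).symm
        _ = (O b).ncard := by rw [Set.ncard_eq_toFinset_card']
        _ < T := hb
    obtain ⟨i, j, hne', heq⟩ := Fintype.exists_ne_map_eq_of_card_lt
      (fun n : Fin T => (⟨fun k => (q : ZMod d) ^ (n : ℕ) * b k, ⟨n, rfl⟩⟩ : O b)) hcardO
    have heq' : (fun k => (q : ZMod d) ^ (i : ℕ) * b k)
        = (fun k => (q : ZMod d) ^ (j : ℕ) * b k) := congrArg Subtype.val heq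
    have key : ∀ u v : ℕ, u < v → v < T →
        (fun k => (q : ZMod d) ^ u * b k) = (fun k => (q : ZMod d) ^ v * b k) →
        ∃ ℓ, 1 ≤ ℓ ∧ ℓ < T ∧ ∀ i, (q : ZMod d) ^ ℓ * b i = b i := by
      intro u v huv hvT hfeq
      refine ⟨v - u, by omega, by omega, ?_⟩
      intro k
      have h := congrFun hfeq k
      change (q : ZMod d) ^ u * b k = (q : ZMod d) ^ v * b k at h
      have h3 := congrArg (fun z => (q : ZMod d) ^ (u * M') * z) h
      change (q : ZMod d) ^ (u * M') * ((q : ZMod d) ^ u * b k) = (q : ZMod d) ^ (u * M') * ((q : ZMod d) ^ v * b k) at h3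
      rw [← mul_assoc, ← mul_assoc, ← pow_add, ← pow_add] at h3
      have e1 : (q : ZMod d) ^ (u * M' + u) = 1 := by
        rw [show u * M' + u = (M' + 1) * u by ring, pow_mul, hqM, one_pow]
      have e2 : (q : ZMod d) ^ (u * M' + v) = (q : ZMod d) ^ (v - u) := by
        rw [show u * M' + v = (u * M' + u) + (v - u) by omega, pow_add, e1, one_mul]
      rw [e1, e2, one_mul] at h3
      exact h3.symm
    have hvne : (i : ℕ) ≠ (j : ℕ) := fun hc => hne' (Fin.ext hc)
    rcases Nat.lt_or_ge (i : ℕ) (j : ℕ) with hlt | hge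
    · exact key i j hlt j.isLt heq'
    · exact key j i (by omega) i.isLt heq'.symm
  -- short orbit bound
  have hshort : ∀ T : ℕ, (B.filter (fun S => ¬ T ≤ S.ncard)).card
      ≤ ∑ ℓ ∈ Finset.Icc 1 (T - 1),
        (Finset.univ.filter (fun a : Fin 4 → ZMod d =>
          (∀ i, (q : ZMod d) ^ ℓ * a i = a i) ∧ ∑ i, a i = 0)).card := by
    intro T
    set W := (Finset.Icc 1 (T - 1)).biUnion (fun ℓ => Finset.univ.filter
      (fun a : Fin 4 → ZMod d => (∀ i, (q : ZMod d) ^ ℓ * a i = a i) ∧ ∑ i, a i = 0)) with hW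
    have hrep : ∀ S ∈ B.filter (fun S => ¬ T ≤ S.ncard),
        ∃ x, (if h : S.Nonempty then h.some else fun _ => 0) = x ∧ x ∈ S ∧ x ∈ Λ ∧ O x = S := by
      intro S hS
      rw [Finset.mem_filter] at hS
      obtain ⟨hSB, hST⟩ := hS
      obtain ⟨a, haA, haO⟩ := Finset.mem_image.mp hSB
      have hne' : S.Nonempty := ⟨a, haO ▸ hmemO a⟩
      refine ⟨hne'.some, dif_pos hne', hne'.some_mem, ?_, ?_⟩
      · exact (haO ▸ hOΛ a ((hmemA a).mp haA)) hne'.some_mem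
      · have hx' : hne'.some ∈ O a := haO ▸ hne'.some_mem
        rw [hOeq a _ hx', haO]
    have hmaps : ∀ S ∈ B.filter (fun S => ¬ T ≤ S.ncard),
        (if h : S.Nonempty then h.some else fun _ => 0) ∈ W := by
      intro S hS
      obtain ⟨x, hfx, hxS, hxΛ, hxO⟩ := hrep S hS
      rw [Finset.mem_filter] at hS
      have hlt : S.ncard < T := by omega
      have hOlt : (O x).ncard < T := by rw [hxO]; exact hlt
      obtain ⟨ℓ, hℓ1, hℓT, hper⟩ := hshortper T x hOlt
      rw [hfx, hW]
      apply Finset.mem_biUnion.mpr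
      exact ⟨ℓ, Finset.mem_Icc.mpr ⟨hℓ1, by omega⟩,
        Finset.mem_filter.mpr ⟨Finset.mem_univ _, hper, hsub x hxΛ⟩⟩
    have hinj : ∀ S₁ ∈ B.filter (fun S => ¬ T ≤ S.ncard),
        ∀ S₂ ∈ B.filter (fun S => ¬ T ≤ S.ncard),
        (if h : S₁.Nonempty then h.some else fun _ => 0)
          = (if h : S₂.Nonempty then h.some else fun _ => 0) → S₁ = S₂ := by
      intro S₁ h₁ S₂ h₂ hf
      obtain ⟨x₁, hfx₁, _, _, hxO₁⟩ := hrep S₁ h₁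
      obtain ⟨x₂, hfx₂, _, _, hxO₂⟩ := hrep S₂ h₂
      rw [hfx₁, hfx₂] at hf
      rw [← hxO₁, ← hxO₂, hf]
    calc (B.filter (fun S => ¬ T ≤ S.ncard)).card ≤ W.card :=
        Finset.card_le_card_of_injOn _ hmaps hinj
      _ ≤ _ := Finset.card_biUnion_le
  -- endgame
  rw [hgoal]
  have hNA : Nat.card ↥Λ = A.card := by
    rw [Nat.card_coe_set_eq]; exact Set.ncard_eq_toFinset_card Λ hfin
  set N := Nat.card ↥Λ with hNdef
  have hN2 : 2 ≤ N := hcard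
  have hn1 : (1:ℝ) < (N:ℝ) := by exact_mod_cast Nat.lt_of_lt_of_le one_lt_two hN2
  set L := Real.log (N:ℝ) with hLdef
  set lq := Real.log (q:ℝ) with hlqdef
  have hL : 0 < L := Real.log_pos hn1
  have hlq0 : (0:ℝ) < lq := Real.log_pos (by exact_mod_cast Nat.lt_of_lt_of_le one_lt_two hq)
  have hlq2 : (0.6931 : ℝ) ≤ lq := by
    have h2q : (2:ℝ) ≤ (q:ℝ) := by exact_mod_cast hq
    calc (0.6931:ℝ) ≤ Real.log 2 := by linarith [Real.log_two_gt_d9]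
      _ ≤ lq := Real.log_le_log (by norm_num) h2q
  rcases le_or_gt N (q ^ 8) with hcase | hcase
  · -- trivial case
    have hBN : (B.card : ℝ) ≤ (N : ℝ) := by
      have h1 : B.card ≤ A.card := Finset.card_image_le
      exact_mod_cast h1.trans hNA.ge
    have hlogN : L ≤ 8 * lq := by
      have hcast : (N:ℝ) ≤ (q:ℝ)^8 := by exact_mod_cast hcase
      calc L ≤ Real.log ((q:ℝ)^8) := Real.log_le_log (by positivity) hcast
        _ = 8 * lq := by rw [Real.log_pow]; push_cast; ring
    have hkey : (N:ℝ) ≤ 8 * lq * N / L := by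
      rw [le_div_iff₀ hL]
      nlinarith
    linarith
  · -- main case
    have h256 : (257:ℕ) ≤ N := by
      have h28 : 2^8 ≤ q^8 := Nat.pow_le_pow_left hq 8
      omega
    set T := Nat.floor (L / (7 * lq)) + 1 with hT
    have hT1 : 1 ≤ T := Nat.le_add_left 1 _
    have harg : 0 ≤ L / (7*lq) := by positivity
    have hTlb : L / (7 * lq) < (T : ℝ) := by
      rw [hT]; push_cast; exact Nat.lt_floor_add_one _
    have hTub : ((T : ℝ)) - 1 ≤ L / (7 * lq) := by
      rw [hT]; push_cast; simpa using Nat.floor_le harg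
    have hTpos : (0:ℝ) < (T:ℝ) := by exact_mod_cast hT1
    -- long part
    have hlongR : ((B.filter (fun S => T ≤ S.ncard)).card : ℝ) ≤ 7 * lq * N / L := by
      have h1 : ((B.filter (fun S => T ≤ S.ncard)).card : ℝ) * T ≤ (N:ℝ) := by
        exact_mod_cast (hlong T).trans_eq hNA.symm
      have h2 : ((B.filter (fun S => T ≤ S.ncard)).card : ℝ) ≤ (N:ℝ) / T := by
        rw [le_div_iff₀ hTpos]; exact h1
      have h3 : (N:ℝ) / T ≤ (N:ℝ) / (L / (7*lq)) := by
        apply div_le_div_of_nonneg_left (by positivity) (by positivity) hTlb.le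
      have h4 : (N:ℝ) / (L/(7*lq)) = 7 * lq * N / L := by
        field_simp
      linarith
    -- short part
    have hq83 : 8 ≤ q^3 := by
      calc 8 = 2^3 := by norm_num
        _ ≤ q^3 := Nat.pow_le_pow_left hq 3
    have hgeom := geom_aux (q^3) hq83 (T-1)
    have hsliceSum : ∑ ℓ ∈ Finset.Icc 1 (T-1),
        (Finset.univ.filter (fun a : Fin 4 → ZMod d =>
          (∀ i, (q : ZMod d) ^ ℓ * a i = a i) ∧ ∑ i, a i = 0)).card
        ≤ ∑ ℓ ∈ Finset.Icc 1 (T-1), (q^3)^ℓ := by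
      apply Finset.sum_le_sum
      intro ℓ hℓ
      rw [Finset.mem_Icc] at hℓ
      have hsl := slice_card_le d q ℓ (by omega) hq hℓ.1
      calc (Finset.univ.filter (fun a : Fin 4 → ZMod d =>
            (∀ i, (q : ZMod d) ^ ℓ * a i = a i) ∧ ∑ i, a i = 0)).card
          = Fintype.card {a : Fin 4 → ZMod d //
            (∀ i, (q : ZMod d) ^ ℓ * a i = a i) ∧ ∑ i, a i = 0} :=
            (Fintype.card_subtype _).symm
        _ = Nat.card {a : Fin 4 → ZMod d //
            (∀ i, (q : ZMod d) ^ ℓ * a i = a i) ∧ ∑ i, a i = 0} :=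
            Nat.card_eq_fintype_card.symm
        _ ≤ (q^3)^ℓ := hsl
    have hshortN : 7 * (B.filter (fun S => ¬ T ≤ S.ncard)).card ≤ 8 * (q^3)^(T-1) := by
      calc 7 * (B.filter (fun S => ¬ T ≤ S.ncard)).card
          ≤ 7 * ∑ ℓ ∈ Finset.Icc 1 (T-1), (q^3)^ℓ :=
            Nat.mul_le_mul_left 7 ((hshort T).trans hsliceSum)
        _ ≤ 8 * (q^3)^(T-1) := hgeom
    have hshortR : ((B.filter (fun S => ¬ T ≤ S.ncard)).card : ℝ)
        ≤ (8/7) * (((q:ℝ)^3)^(T-1)) := by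
      have h7 : (7:ℝ) * ((B.filter (fun S => ¬ T ≤ S.ncard)).card : ℝ)
          ≤ 8 * (((q:ℝ)^3)^(T-1)) := by exact_mod_cast hshortN
      linarith
    have hqpos : (0:ℝ) < (q:ℝ) := by positivity
    have hqpow : (((q:ℝ)^3)^(T-1)) ≤ Real.exp (3/7 * L) := by
      rw [← pow_mul]
      apply (Real.log_le_iff_le_exp (pow_pos hqpos _)).mp
      rw [Real.log_pow]
      have hc : ((3*(T-1):ℕ):ℝ) = 3*((T:ℝ)-1) := by
        push_cast [Nat.cast_sub hT1]; ring
      rw [hc]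
      calc 3*((T:ℝ)-1)*lq ≤ 3*(L/(7*lq))*lq := by nlinarith
        _ = 3/7*L := by field_simp
    set y := Real.exp (L/7) with hy
    have hy0 : (0:ℝ) < y := Real.exp_pos _
    have hy7 : y^7 = (N:ℝ) := by
      rw [hy, ← Real.exp_nat_mul]
      rw [show ((7:ℕ):ℝ)*(L/7) = L by push_cast; ring, hLdef,
        Real.exp_log (by positivity)]
    have hy3 : Real.exp (3/7*L) = y^3 := by
      rw [hy, ← Real.exp_nat_mul]
      rw [show ((3:ℕ):ℝ)*(L/7) = 3/7*L by push_cast; ring]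
    have hy22 : (2.2:ℝ) ≤ y := by
      by_contra hcon
      push_neg at hcon
      have hlt : y^7 < (2.2:ℝ)^7 := by
        apply pow_lt_pow_left₀ hcon hy0.le
        norm_num
      rw [hy7] at hlt
      have h257 : (257:ℝ) ≤ (N:ℝ) := by exact_mod_cast h256
      norm_num at hlt
      linarith
    have hyL : L ≤ 7*(y-1) := by
      have hlogy : Real.log y = L/7 := by rw [hy, Real.log_exp]
      have hlog := Real.log_le_sub_one_of_pos hy0
      rw [hlogy] at hlog; linarith
    have hfinal : (8/7) * y^3 ≤ lq * N / L := by
      rw [le_div_iff₀ hL]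
      have h1 : (8/7)*y^3*L ≤ (8/7)*y^3*(7*(y-1)) :=
        mul_le_mul_of_nonneg_left hyL (by positivity)
      have ha : (4.84:ℝ) ≤ y^2 := by nlinarith [hy22, hy0]
      have hb : (4.84:ℝ) * y^2 ≤ y^4 := by nlinarith [ha, sq_nonneg y, pow_pos hy0 2]
      have hstep : 8*(y-1) ≤ 0.6931 * y^4 := by
        nlinarith [ha, hb, sq_nonneg (3.3546*y - 4), pow_pos hy0 2]
      have h3 : 8*y^3*(y-1) ≤ 0.6931*y^7 := by
        have h5 : y^3 * (8*(y-1)) ≤ y^3 * (0.6931*y^4) :=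
          mul_le_mul_of_nonneg_left hstep (by positivity)
        nlinarith [h5]
      have h4 : (0.6931:ℝ)*y^7 ≤ lq*(N:ℝ) := by
        rw [← hy7]
        have : (0:ℝ) ≤ y^7 := by positivity
        nlinarith
      linarith
    have hsplit : B.card = (B.filter (fun S => T ≤ S.ncard)).card
        + (B.filter (fun S => ¬ T ≤ S.ncard)).card :=
      (Finset.card_filter_add_card_filter_not (p := fun S : Set (Fin 4 → ZMod d) => T ≤ S.ncard)).symm
    have hcomb : (B.card:ℝ) ≤ 7*lq*N/L + (8/7)*y^3 := by
      have hq3 : (((q:ℝ)^3)^(T-1)) ≤ y^3 := by rw [← hy3]; exact hqpow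
      rw [hsplit]
      push_cast
      have h6 : ((B.filter (fun S => ¬ T ≤ S.ncard)).card : ℝ) ≤ (8/7)*y^3 := by
        calc ((B.filter (fun S => ¬ T ≤ S.ncard)).card : ℝ)
            ≤ (8/7) * (((q:ℝ)^3)^(T-1)) := hshortR
          _ ≤ (8/7) * y^3 := by linarith [hq3]
      linarith [hlongR, h6]
    calc (B.card:ℝ) ≤ 7*lq*N/L + (8/7)*y^3 := hcomb
      _ ≤ 7*lq*N/L + lq*N/L := by linarith
      _ = 8*lq*N/L := by ring
      _ ≤ 1 + 8*lq*(N:ℝ)/L := by linarith
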